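/- arXiv:1110.2937 — 2 statements merged into one kernel-verified Lean document; each statement's English description precedes it below -/
import Mathlib

section
/- Let $\Sigma, \Sigma^* $ be an adjoint pair of additive endofunctors on a module category such that there are functorial exact sequences $0 \to \mathrm{soc}_i \to \mathrm{id} \to \Sigma\Sigma^* \to 0$ and $0 \to \Sigma^*\Sigma \to \mathrm{id} \to \mathrm{top}_i \to 0$. Then $\Sigma$ and $\Sigma^*$ restrict to mutually inverse equivalences between the full subcategory of modules with trivial $i$-top and the full subcategory of modules with trivial $i$-socle. -/
open CategoryTheory Limits

/-- an adjoint pair `Σ* ⊣ Σ` of additive endofunctors with functorial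
exact sequences `0 → soc_i → id → ΣΣ* → 0` and `0 → Σ*Σ → id → top_i → 0` restricts
to mutually inverse equivalences between the full subcategory of modules with trivial
`i`-top and the full subcategory of modules with trivial `i`-socle. -/
theorem stmt2 {A : Type*} [Category A] [Abelian A]
    (Sig SigStar soc top : A ⥤ A) [Sig.Additive] [SigStar.Additive]
    (adj : SigStar ⊣ Sig)
    -- the functorial exact sequence 0 → soc_i → id → ΣΣ* → 0
    (α : soc ⟶ 𝟭 A) (γ : 𝟭 A ⟶ SigStar ⋙ Sig)
    (hαγ : ∀ M : A, α.app M ≫ γ.app M = 0)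
    (hα : ∀ M : A, Mono (α.app M)) (hγ : ∀ M : A, Epi (γ.app M))
    (hex₁ : ∀ M : A, (ShortComplex.mk (α.app M) (γ.app M) (hαγ M)).Exact)
    -- the functorial exact sequence 0 → Σ*Σ → id → top_i → 0
    (δ : Sig ⋙ SigStar ⟶ 𝟭 A) (ε : 𝟭 A ⟶ top)
    (hδε : ∀ M : A, δ.app M ≫ ε.app M = 0)
    (hδ : ∀ M : A, Mono (δ.app M)) (hε : ∀ M : A, Epi (ε.app M))
    (hex₂ : ∀ M : A, (ShortComplex.mk (δ.app M) (ε.app M) (hδε M)).Exact) :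
    -- Σ sends trivial i-top modules to trivial i-socle modules, Σ* conversely,
    (∀ M : A, IsZero (top.obj M) → IsZero (soc.obj (Sig.obj M))) ∧
    (∀ N : A, IsZero (soc.obj N) → IsZero (top.obj (SigStar.obj N))) ∧
    -- and the unit/counit are isomorphisms there, so the restrictions of Σ and Σ*
    -- are mutually inverse equivalences between the two full subcategories
    (∀ M : A, IsZero (top.obj M) → IsIso (δ.app M)) ∧
    (∀ N : A, IsZero (soc.obj N) → IsIso (γ.app N)) := by
  refine ⟨fun M _ => ?_, fun N _ => ?_, fun M hM => ?_, fun N hN => ?_⟩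
  · -- soc (Σ M) = 0, in fact unconditionally
    set k := α.app (Sig.obj M) with hk
    -- naturality of γ at k, together with α ≫ γ = 0 and γ epi, gives ΣΣ* k = 0
    have h1 : (SigStar ⋙ Sig).map k = 0 := by
      haveI := hγ (soc.obj (Sig.obj M))
      rw [← cancel_epi (γ.app (soc.obj (Sig.obj M))), comp_zero,
        ← γ.naturality k]
      simpa using hαγ (Sig.obj M)
    -- naturality of the unit at k then gives k ≫ unit = 0
    have h2 : k ≫ adj.unit.app (Sig.obj M) = 0 := by
      have := adj.unit.naturality k
      simp only [Functor.id_map, h1, comp_zero] at this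
      simpa using this
    -- the triangle identity gives k = 0
    have h3 : k = 0 := by
      have h4 := h2 =≫ Sig.map (adj.counit.app M)
      rw [zero_comp, Category.assoc, adj.right_triangle_components] at h4
      simpa using h4
    haveI := hα (Sig.obj M)
    exact IsZero.of_mono_eq_zero k h3
  · -- top (Σ* N) = 0, in fact unconditionally
    set c := ε.app (SigStar.obj N) with hc
    have h1 : (Sig ⋙ SigStar).map c = 0 := by
      haveI := hδ (top.obj (SigStar.obj N))
      rw [← cancel_mono (δ.app (top.obj (SigStar.obj N))), zero_comp,
        δ.naturality c]
      simpa using hδε (SigStar.obj N)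
    have h2 : adj.counit.app (SigStar.obj N) ≫ c = 0 := by
      have := adj.counit.naturality c
      simp only [Functor.id_map, h1, zero_comp] at this
      exact this.symm
    have h3 : c = 0 := by
      have h4 := SigStar.map (adj.unit.app N) ≫= h2
      rw [comp_zero, ← Category.assoc] at h4
      erw [adj.left_triangle_components] at h4
      simpa using h4
    haveI := hε (SigStar.obj N)
    exact IsZero.of_epi_eq_zero c h3
  · -- top M = 0 ⇒ δ.app M is iso
    have hε0 : ε.app M = 0 := hM.eq_zero_of_tgt _
    haveI := hδ M
    haveI : Epi (δ.app M) := (hex₂ M).epi_f hε0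
    exact isIso_of_mono_of_epi _
  · -- soc N = 0 ⇒ γ.app N is iso
    have hα0 : α.app N = 0 := hN.eq_zero_of_src _
    haveI := hγ N
    haveI : Mono (γ.app N) := (hex₁ N).mono_g hα0
    exact isIso_of_mono_of_epi _
end

section
/- Let $Q$ be a quiver whose underlying graph is connected with at least one edge, and suppose vertices $i$ and $j$ are joined by exactly one edge. If BGP reflection functors satisfy the braid relation $\Sigma_i\Sigma_j\Sigma_i \cong \Sigma_j\Sigma_i\Sigma_j$ as functors on nilpotent $\Lambda$-modules, then for any two reduced expressions $(i_r,\ldots,i_1)$ and $(j_r,\ldots,j_1)$ of the same Weyl group element $w$ in a simply-laced Weyl group, the functors $\Sigma_{i_r}\cdots\Sigma_{i_1}$ and $\Sigma_{j_r}\cdots\Sigma_{j_1}$ are isomorphic. -/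
open CategoryTheory

/-! Statement 17: if the reflection functors `Σ_i` on (nilpotent `Λ`-)modules satisfy
the braid relation `Σ_iΣ_jΣ_i ≅ Σ_jΣ_iΣ_j` when `i, j` are joined by a single edge and
commute when `i, j` are not adjacent, then for any two reduced expressions of the same
element `w` of the (simply-laced) Weyl group the corresponding composite functors are
isomorphic. -/

/-- The composite functor `Σ_{i_1} ⋙ ⋯ ⋙ Σ_{i_r}` attached to the word `[i_r, …, i_1]`. -/
def wordFunctor {B : Type*} {C : Type*} [Category C] (Sg : B → C ⥤ C) :
    List B → C ⥤ C
  | [] => 𝟭 C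
  | i :: t => wordFunctor Sg t ⋙ Sg i

namespace Stmt17Aux

open CoxeterSystem List

attribute [local instance] Classical.propDecidable

private lemma conj_eq_iff {W : Type*} [Group W] (A B c x : W) :
    A * x * B = c ↔ x = A⁻¹ * c * B⁻¹ :=
  ⟨fun h => by rw [← h]; group, fun h => by rw [h]; group⟩

private lemma alt1 {W : Type*} [Group W] (a b : W) (k : ℕ) :
    b * (a * b) ^ k = (b * a) ^ k * b := by
  induction k with
  | zero => simp
  | succ k ih =>
    calc b * (a * b) ^ (k + 1) = b * a * b * (a * b) ^ k := by
          rw [pow_succ', ← mul_assoc, ← mul_assoc]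
    _ = (b * a) * ((b * a) ^ k * b) := by rw [mul_assoc, ih]
    _ = (b * a) ^ (k + 1) * b := by rw [← mul_assoc, ← pow_succ']

private lemma alt2 {W : Type*} [Group W] (a b : W) (k : ℕ) :
    (b * a) ^ k * b * (a * b) ^ k = (b * a) ^ (2 * k) * b := by
  rw [mul_assoc, alt1, ← mul_assoc, ← pow_add, two_mul]

private lemma alt3 {W : Type*} [Group W] (a b : W) (k : ℕ) :
    (b * a) ^ k * (b * a * b) * (a * b) ^ k = (b * a) ^ (2 * k + 1) * b := by
  have h1 : b * a * b * (a * b) ^ k = (b * a) ^ (k + 1) * b := by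
    rw [mul_assoc (b * a) b, alt1, ← mul_assoc, ← pow_succ']
  rw [mul_assoc, h1, ← mul_assoc, ← pow_add, show k + (k + 1) = 2 * k + 1 by ring]

variable {B : Type*} {W : Type*} [Group W] {M : CoxeterMatrix B} (cs : CoxeterSystem M W)

local prefix:100 "s" => cs.simple
local prefix:100 "π" => cs.wordProd
local prefix:100 "ℓ" => cs.length

private lemma zmod2_add_self : ∀ x : ZMod 2, x + x = 0 := by decide

/-- Sign-tracking permutation attached to a simple reflection. -/
noncomputable def eta (i : B) : Equiv.Perm (W × ZMod 2) :=
  Function.Involutive.toPerm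
    (fun p => (s i * p.1 * s i, p.2 + if p.1 = s i then 1 else 0))
    (by
      rintro ⟨w, ε⟩
      have h1 : s i * (s i * w * s i) * s i = w := by
        rw [← mul_assoc, ← mul_assoc, cs.simple_mul_simple_self, one_mul,
          cs.simple_mul_simple_cancel_right]
      have h2 : (s i * w * s i = s i) ↔ (w = s i) := by
        rw [conj_eq_iff, cs.inv_simple, cs.simple_mul_simple_self, one_mul]
      simp only [Prod.mk.injEq, h1, h2, true_and]
      split_ifs with h
      · rw [add_assoc, zmod2_add_self, add_zero]
      · rw [add_zero, add_zero])

@[simp] lemma eta_apply (i : B) (x : W × ZMod 2) :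
    eta cs i x = (s i * x.1 * s i, x.2 + if x.1 = s i then 1 else 0) := rfl

lemma eta_mul_pow (i j : B) (k : ℕ) (x : W × ZMod 2) :
    ((eta cs i * eta cs j) ^ k) x =
      ((s i * s j) ^ k * x.1 * (s j * s i) ^ k,
        x.2 + ∑ l ∈ Finset.range (2 * k),
          (if x.1 = (s j * s i) ^ l * s j then (1 : ZMod 2) else 0)) := by
  induction k with
  | zero => simp
  | succ k ih =>
    rw [pow_succ', Equiv.Perm.mul_apply, ih]
    simp only [Equiv.Perm.mul_apply, eta_apply]
    have hinvP : ((s i * s j) ^ k)⁻¹ = (s j * s i) ^ k := by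
      rw [← inv_pow, mul_inv_rev, cs.inv_simple, cs.inv_simple]
    have hinvQ : ((s j * s i) ^ k)⁻¹ = (s i * s j) ^ k := by
      rw [← inv_pow, mul_inv_rev, cs.inv_simple, cs.inv_simple]
    have hc1 : ((s i * s j) ^ k * x.1 * (s j * s i) ^ k = s j)
        ↔ (x.1 = (s j * s i) ^ (2 * k) * s j) := by
      rw [conj_eq_iff, hinvP, hinvQ, alt2]
    have hc2 : (s j * ((s i * s j) ^ k * x.1 * (s j * s i) ^ k) * s j = s i)
        ↔ (x.1 = (s j * s i) ^ (2 * k + 1) * s j) := by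
      have hre : s j * ((s i * s j) ^ k * x.1 * (s j * s i) ^ k) * s j
          = (s j * (s i * s j) ^ k) * x.1 * ((s j * s i) ^ k * s j) := by group
      have hconst : (s j * (s i * s j) ^ k)⁻¹ * s i * ((s j * s i) ^ k * s j)⁻¹
          = (s j * s i) ^ (2 * k + 1) * s j := by
        rw [mul_inv_rev, mul_inv_rev, hinvP, hinvQ]
        simp only [cs.inv_simple]
        rw [← alt3 (cs.simple i) (cs.simple j) k]
        group
      rw [hre, conj_eq_iff, hconst]
    have hfst : s i * (s j * ((s i * s j) ^ k * x.1 * (s j * s i) ^ k) * s j) * s i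
        = (s i * s j) ^ (k + 1) * x.1 * (s j * s i) ^ (k + 1) := by
      rw [pow_succ' (s i * s j), pow_succ (s j * s i)]
      group
    refine Prod.ext hfst ?_
    show x.2 + (∑ l ∈ Finset.range (2 * k), _) + _ + _ = x.2 + ∑ l ∈ Finset.range (2 * (k + 1)), _
    rw [show 2 * (k + 1) = (2 * k + 1) + 1 by ring, Finset.sum_range_succ,
      Finset.sum_range_succ, hc1, hc2]
    ring

lemma eta_liftable : CoxeterMatrix.IsLiftable M (eta cs) := by
  intro i j
  apply Equiv.ext
  intro x
  rw [eta_mul_pow]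
  have hP : (s i * s j) ^ M i j = 1 := cs.simple_mul_simple_pow i j
  have hQ : (s j * s i) ^ M i j = 1 := cs.simple_mul_simple_pow' i j
  have hsum : ∑ l ∈ Finset.range (2 * M i j),
      (if x.1 = (s j * s i) ^ l * s j then (1 : ZMod 2) else 0) = 0 := by
    rw [two_mul, Finset.sum_range_add]
    have hper : ∀ l : ℕ, (s j * s i) ^ (M i j + l) = (s j * s i) ^ l := by
      intro l; rw [pow_add, hQ, one_mul]
    simp only [hper]
    exact zmod2_add_self _
  rw [hP, hsum]
  simp

/-- The sign-tracking representation of `W`. -/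
noncomputable def rho : W →* Equiv.Perm (W × ZMod 2) := cs.lift ⟨eta cs, eta_liftable cs⟩

lemma rho_simple (i : B) : rho cs (s i) = eta cs i := cs.lift_apply_simple (eta_liftable cs) i

/-- The (mod 2) number of occurrences of `x₁` in the left inversion sequence of `ω`. -/
noncomputable def sgn (x₁ : W) (ω : List B) : ZMod 2 :=
  ((cs.leftInvSeq ω).map (fun t => if x₁ = t then (1 : ZMod 2) else 0)).sum

lemma sgn_cons (x₁ : W) (i : B) (ω : List B) :
    sgn cs x₁ (i :: ω) = (if x₁ = s i then 1 else 0) + sgn cs (s i * x₁ * s i) ω := by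
  have hconj : ∀ t : W, (x₁ = MulAut.conj (s i) t) = (s i * x₁ * s i = t) := by
    intro t
    rw [MulAut.conj_apply, cs.inv_simple]
    apply propext
    constructor
    · intro h
      rw [h, ← mul_assoc, ← mul_assoc, cs.simple_mul_simple_self, one_mul,
        cs.simple_mul_simple_cancel_right]
    · intro h
      rw [← h, ← mul_assoc, ← mul_assoc, cs.simple_mul_simple_self, one_mul,
        cs.simple_mul_simple_cancel_right]
  show ((cs.leftInvSeq (i :: ω)).map _).sum = _
  rw [leftInvSeq]
  rw [List.map_cons, List.sum_cons, List.map_map]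
  congr 1
  show (List.map ((fun t => if x₁ = t then (1 : ZMod 2) else 0) ∘ (MulAut.conj (s i))) (cs.leftInvSeq ω)).sum = _
  congr 1
  apply List.map_congr_left
  intro t _
  simp only [Function.comp_apply, hconj]

lemma rho_inv_wordProd (ω : List B) (x : W × ZMod 2) :
    rho cs (π ω)⁻¹ x = ((π ω)⁻¹ * x.1 * (π ω), x.2 + sgn cs x.1 ω) := by
  induction ω generalizing x with
  | nil => simp [sgn]
  | cons i ω ih =>
    have h1 : (π (i :: ω))⁻¹ = (π ω)⁻¹ * s i := by
      rw [cs.wordProd_cons, mul_inv_rev, cs.inv_simple]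
    rw [h1, map_mul, Equiv.Perm.mul_apply, rho_simple, eta_apply, ih, sgn_cons]
    refine Prod.ext ?_ ?_
    · show (π ω)⁻¹ * (s i * x.1 * s i) * (π ω) = ((π ω)⁻¹ * s i) * x.1 * (s i * π ω)
      group
    · show x.2 + _ + _ = x.2 + (_ + _)
      ring

lemma mem_leftInvSeq_of_descent {ω : List B} (hω : cs.IsReduced ω) {i : B}
    (h : ℓ (s i * π ω) < ℓ (π ω)) : s i ∈ cs.leftInvSeq ω := by
  set w := π ω with hw
  obtain ⟨ω', hred', heq'⟩ := cs.exists_reduced_word' (s i * w)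
  have hπ'' : π (i :: ω') = w := by
    rw [cs.wordProd_cons, ← heq', cs.simple_mul_simple_cancel_left]
  -- second components of rho cs (w⁻¹) (s i, 0) computed two ways
  have e1 := rho_inv_wordProd cs ω (s i, (0 : ZMod 2))
  have e2 := rho_inv_wordProd cs (i :: ω') (s i, (0 : ZMod 2))
  rw [hπ''] at e2
  rw [← hw] at e1
  have hsgn : sgn cs (s i) ω = sgn cs (s i) (i :: ω') := by
    have h2 := congrArg Prod.snd (e1.symm.trans e2)
    simpa using h2
  have hz : sgn cs (s i) ω' = 0 := by
    apply List.sum_eq_zero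
    intro z hz
    obtain ⟨t, ht, rfl⟩ := List.mem_map.mp hz
    have hne : s i ≠ t := by
      intro hst
      have hli := cs.isLeftInversion_of_mem_leftInvSeq hred' (hst ▸ ht)
      have : ℓ (s i * π ω') < ℓ (π ω') := hli.2
      rw [← heq', cs.simple_mul_simple_cancel_left] at this
      omega
    simp [hne]
  have hone : sgn cs (s i) (i :: ω') = 1 := by
    rw [sgn_cons]
    have : s i * s i * s i = s i := by
      rw [cs.simple_mul_simple_self, one_mul]
    rw [this, hz, if_pos rfl, add_zero]
  by_contra hmem
  have : sgn cs (s i) ω = 0 := by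
    apply List.sum_eq_zero
    intro z hzz
    obtain ⟨t, ht, rfl⟩ := List.mem_map.mp hzz
    have hne : s i ≠ t := fun hst => hmem (hst ▸ ht)
    simp [hne]
  rw [this, hone] at hsgn
  exact one_ne_zero hsgn.symm

/-- The (left) exchange condition. -/
lemma exchange {ω : List B} (hω : cs.IsReduced ω) {i : B}
    (h : ℓ (s i * π ω) < ℓ (π ω)) :
    ∃ k, k < ω.length ∧ s i * π ω = π (ω.eraseIdx k) := by
  have hmem := mem_leftInvSeq_of_descent cs hω h
  obtain ⟨k, hk, hkeq⟩ := List.getElem_of_mem hmem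
  refine ⟨k, by simpa using hk, ?_⟩
  have := cs.getD_leftInvSeq_mul_wordProd ω k
  rw [List.getD_eq_getElem _ _ hk, hkeq] at this
  exact this

/-! ### Geometric representation (simply-laced) and injectivity of simple reflections -/

variable (M) in
/-- Simply-laced Cartan-style pairing values. -/
noncomputable def carm (i j : B) : ℚ := if i = j then 2 else if M i j = 3 then -1 else 0

variable (M) in
/-- The linear form `v ↦ ⟨v, αᵢ^∨⟩`. -/
noncomputable def lform (i : B) : (B →₀ ℚ) →ₗ[ℚ] ℚ :=
  Finsupp.linearCombination ℚ (fun j => carm M i j)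

variable (M) in
/-- The reflection `σᵢ` in the geometric representation. -/
noncomputable def sig (i : B) : Module.End ℚ (B →₀ ℚ) :=
  LinearMap.id - (lform M i).smulRight (Finsupp.single i 1)

lemma sig_apply (i : B) (v : B →₀ ℚ) :
    sig M i v = v - (lform M i v) • Finsupp.single i 1 := rfl

lemma lform_single (i j : B) : lform M i (Finsupp.single j 1) = carm M i j := by
  simp [lform, Finsupp.linearCombination_single]

lemma carm_self (i : B) : carm M i i = 2 := by simp [carm]

lemma carm_symm (i j : B) : carm M i j = carm M j i := by
  unfold carm
  rcases eq_or_ne i j with h | h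
  · rw [h]
  · rw [if_neg h, if_neg h.symm, M.symmetric i j]

lemma sig_liftable (hSL : ∀ i j : B, i ≠ j → M i j = 2 ∨ M i j = 3) :
    CoxeterMatrix.IsLiftable M (sig M (B := B)) := by
  have sq : ∀ i : B, sig M i * sig M i = 1 := by
    intro i
    apply LinearMap.ext
    intro v
    have h1 : lform M i (sig M i v) = -(lform M i v) := by
      rw [sig_apply, map_sub, map_smul, lform_single, carm_self, smul_eq_mul]
      ring
    show sig M i (sig M i v) = v
    rw [sig_apply (v := sig M i v), h1, sig_apply]
    module
  intro i j
  rcases eq_or_ne i j with rfl | hne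
  · rw [M.diagonal, pow_one]; exact sq i
  rcases hSL i j hne with hm | hm
  · -- commuting case
    have cij : carm M i j = 0 := by
      unfold carm; rw [if_neg hne, if_neg (by omega)]
    have cji : carm M j i = 0 := (carm_symm i j).symm.trans cij
    rw [hm, pow_two]
    apply LinearMap.ext
    intro v
    show (sig M i) ((sig M j) ((sig M i) ((sig M j) v))) = v
    simp only [sig_apply, map_sub, map_smul, lform_single, carm_self, cij, cji, smul_eq_mul]
    module
  · -- braid case
    have cij : carm M i j = -1 := by
      unfold carm; rw [if_neg hne, if_pos hm]
    have cji : carm M j i = -1 := (carm_symm i j).symm.trans cij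
    rw [hm, pow_succ, pow_two]
    apply LinearMap.ext
    intro v
    show (sig M i) ((sig M j) ((sig M i) ((sig M j) ((sig M i) ((sig M j) v))))) = v
    simp only [sig_apply, map_sub, map_smul, lform_single, carm_self, cij, cji, smul_eq_mul]
    module

lemma simple_injective (hSL : ∀ i j : B, i ≠ j → M i j = 2 ∨ M i j = 3)
    {i j : B} (hij : i ≠ j) : s i ≠ s j := by
  intro h
  have hs : sig M i = sig M j := by
    rw [← cs.lift_apply_simple (sig_liftable hSL) i, ← cs.lift_apply_simple (sig_liftable hSL) j, h]
  have := congrArg (fun φ : Module.End ℚ (B →₀ ℚ) => (φ (Finsupp.single j 1)) j) hs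
  simp only [sig_apply, lform_single, carm_self] at this
  rw [Finsupp.sub_apply, Finsupp.sub_apply, Finsupp.smul_apply, Finsupp.smul_apply,
    Finsupp.single_eq_of_ne' hij, Finsupp.single_eq_same] at this
  norm_num at this

/-! ### Double descent lemmas -/

lemma descent_succ {w : W} {i : B} (h : ℓ (s i * w) < ℓ w) : ℓ w = ℓ (s i * w) + 1 := by
  rcases cs.length_simple_mul w i with h1 | h1 <;> omega

lemma pq {w : W} {i j : B} (hne : s i ≠ s j)
    (hi : ℓ (s i * w) < ℓ w) (hj : ℓ (s j * w) < ℓ w) :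
    ℓ (s i * (s j * w)) < ℓ (s j * w) ∨ ℓ (s j * (s i * w)) < ℓ (s i * w) := by
  by_cases hP : ℓ (s j * (s i * w)) < ℓ (s i * w)
  · exact Or.inr hP
  left
  obtain ⟨ω', hred', heq'⟩ := cs.exists_reduced_word' (s i * w)
  have hlen' : ω'.length = ℓ (s i * w) := by rw [← hred', ← heq']
  have hπa : π (i :: ω') = w := by
    rw [cs.wordProd_cons, ← heq', cs.simple_mul_simple_cancel_left]
  have hreda : cs.IsReduced (i :: ω') := by
    show ℓ (π (i :: ω')) = (i :: ω').length
    rw [hπa, List.length_cons, hlen', descent_succ cs hi]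
  have hdesc : ℓ (s j * π (i :: ω')) < ℓ (π (i :: ω')) := by rw [hπa]; exact hj
  obtain ⟨k, hk, hkeq⟩ := exchange cs hreda hdesc
  rw [hπa] at hkeq
  match k, hk with
  | 0, hk =>
    rw [List.eraseIdx_cons_zero, ← heq'] at hkeq
    exact absurd (mul_right_cancel hkeq) hne.symm
  | (k + 1), hk =>
    rw [List.eraseIdx_cons_succ] at hkeq
    rw [cs.wordProd_cons] at hkeq
    have hkey : s i * (s j * w) = π (ω'.eraseIdx k) := by
      rw [hkeq, cs.simple_mul_simple_cancel_left]
    have hkl : k < ω'.length := by simpa using hk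
    have hlen_e : (ω'.eraseIdx k).length + 1 = ω'.length := by
      rw [List.length_eraseIdx_add_one hkl]
    have hle : ℓ (s i * (s j * w)) ≤ (ω'.eraseIdx k).length := by
      rw [hkey]; exact cs.length_wordProd_le _
    have h1 := descent_succ cs hi
    have h2 := descent_succ cs hj
    omega

lemma braid_eq {i j : B} (h3 : (s i * s j) ^ 3 = 1) :
    s i * s j * s i = s j * s i * s j := by
  have h2 : (s i * s j) ^ 2 = (s i * s j)⁻¹ :=
    eq_inv_of_mul_eq_one_left (by rw [← pow_succ]; exact h3)
  rw [pow_two, mul_inv_rev, cs.inv_simple, cs.inv_simple] at h2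
  have := congrArg (fun u => u * s j) h2
  rwa [mul_assoc (s i * s j), cs.simple_mul_simple_cancel_right] at this

lemma core3 {w : W} {i j : B} (hne : s i ≠ s j) (h3 : (s i * s j) ^ 3 = 1)
    (hi : ℓ (s i * w) < ℓ w) (hj : ℓ (s j * w) < ℓ w)
    (hQ : ℓ (s i * (s j * w)) < ℓ (s j * w)) :
    ∃ v : W, w = s i * (s j * (s i * v)) ∧ ℓ w = ℓ v + 3 := by
  have hb := braid_eq cs h3
  have h1 := descent_succ cs hi
  have h2 := descent_succ cs hj
  have h4 := descent_succ cs hQ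
  obtain ⟨u, hredu, hequ⟩ := cs.exists_reduced_word' (s i * (s j * w))
  have hulen : u.length = ℓ (s i * (s j * w)) := by rw [← hredu, ← hequ]
  have hπa : π (j :: i :: u) = w := by
    rw [cs.wordProd_cons, cs.wordProd_cons, ← hequ, cs.simple_mul_simple_cancel_left,
      cs.simple_mul_simple_cancel_left]
  have hreda : cs.IsReduced (j :: i :: u) := by
    show ℓ (π (j :: i :: u)) = (j :: i :: u).length
    rw [hπa, List.length_cons, List.length_cons, hulen]
    omega
  have hdesc : ℓ (s i * π (j :: i :: u)) < ℓ (π (j :: i :: u)) := by rw [hπa]; exact hi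
  obtain ⟨k, hk, hkeq⟩ := exchange cs hreda hdesc
  rw [hπa] at hkeq
  match k, hk with
  | 0, hk =>
    rw [List.eraseIdx_cons_zero, cs.wordProd_cons, ← hequ] at hkeq
    have : w = s i * (s j * w) := mul_left_cancel hkeq
    have : ℓ w = ℓ (s i * (s j * w)) := congrArg cs.length this
    omega
  | 1, hk =>
    rw [List.eraseIdx_cons_succ, List.eraseIdx_cons_zero, cs.wordProd_cons, ← hequ] at hkeq
    -- hkeq : s i * w = s j * (s i * (s j * w))
    have hkeq2 : s i * w = (s j * s i * s j) * w := by
      rw [hkeq]; group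
    have h5 : s i = s j * s i * s j := mul_right_cancel hkeq2
    rw [← hb] at h5
    have h6 : (1 : W) * s i = (s i * s j) * s i := by rw [one_mul]; exact h5
    have h7 : (1 : W) = s i * s j := mul_right_cancel h6
    have h8 : s i = s j := by
      have := eq_inv_of_mul_eq_one_left h7.symm
      rwa [cs.inv_simple] at this
    exact absurd h8 hne
  | (k + 2), hk =>
    rw [List.eraseIdx_cons_succ, List.eraseIdx_cons_succ, cs.wordProd_cons,
      cs.wordProd_cons] at hkeq
    -- hkeq : s i * w = s j * (s i * π (u.eraseIdx k))
    refine ⟨π (u.eraseIdx k), ?_, ?_⟩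
    · have := congrArg (fun x => s i * x) hkeq
      simpa [cs.simple_mul_simple_cancel_left] using this
    · have hkl : k < u.length := by simpa using hk
      have hlen_e : (u.eraseIdx k).length + 1 = u.length := by
        rw [List.length_eraseIdx_add_one hkl]
      have hle : ℓ (π (u.eraseIdx k)) ≤ (u.eraseIdx k).length := cs.length_wordProd_le _
      have hup : ℓ (s i * w) ≤ 1 + (1 + ℓ (π (u.eraseIdx k))) := by
        rw [hkeq]
        calc ℓ (s j * (s i * π (u.eraseIdx k)))
            ≤ ℓ (s j) + ℓ (s i * π (u.eraseIdx k)) := cs.length_mul_le _ _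
          _ ≤ ℓ (s j) + (ℓ (s i) + ℓ (π (u.eraseIdx k))) := by
              have := cs.length_mul_le (s i) (π (u.eraseIdx k))
              omega
          _ = 1 + (1 + ℓ (π (u.eraseIdx k))) := by rw [cs.length_simple, cs.length_simple]
      omega

lemma dd2 {w : W} {i j : B} (hne : s i ≠ s j) (hm : M i j = 2)
    (hi : ℓ (s i * w) < ℓ w) (hj : ℓ (s j * w) < ℓ w) :
    ∃ v : W, w = s i * (s j * v) ∧ ℓ w = ℓ v + 2 := by
  have h2 : (s i * s j) ^ 2 = 1 := by rw [← hm]; exact cs.simple_mul_simple_pow i j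
  rcases pq cs hne hi hj with hQ | hQ
  · refine ⟨s i * (s j * w), ?_, ?_⟩
    · have : s i * (s j * (s i * (s j * w))) = ((s i * s j) * (s i * s j)) * w := by group
      rw [this, ← pow_two, h2, one_mul]
    · have := descent_succ cs hj
      have := descent_succ cs hQ
      omega
  · refine ⟨s j * (s i * w), ?_, ?_⟩
    · rw [cs.simple_mul_simple_cancel_left, cs.simple_mul_simple_cancel_left]
    · have := descent_succ cs hi
      have := descent_succ cs hQ
      omega

lemma dd3 {w : W} {i j : B} (hne : s i ≠ s j) (hm : M i j = 3)
    (hi : ℓ (s i * w) < ℓ w) (hj : ℓ (s j * w) < ℓ w) :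
    ∃ v : W, w = s i * (s j * (s i * v)) ∧ ℓ w = ℓ v + 3 := by
  have h3 : (s i * s j) ^ 3 = 1 := by rw [← hm]; exact cs.simple_mul_simple_pow i j
  have h3' : (s j * s i) ^ 3 = 1 := by
    have := cs.simple_mul_simple_pow' i j
    rwa [hm] at this
  rcases pq cs hne hi hj with hQ | hQ
  · exact core3 cs hne h3 hi hj hQ
  · obtain ⟨v, hv, hl⟩ := core3 cs hne.symm h3' hj hi hQ
    refine ⟨v, ?_, hl⟩
    rw [hv]
    have hb := braid_eq cs h3
    calc s j * (s i * (s j * v)) = (s j * s i * s j) * v := by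
          rw [← mul_assoc, ← mul_assoc]
      _ = (s i * s j * s i) * v := by rw [← hb]
      _ = s i * (s j * (s i * v)) := by rw [mul_assoc, mul_assoc]

/-! ### Matsumoto's theorem for functors -/

lemma main {C : Type*} [Category C]
    (hSL : ∀ i j : B, i ≠ j → M i j = 2 ∨ M i j = 3)
    (Sg : B → C ⥤ C)
    (hbraid : ∀ i j : B, M i j = 3 →
      Nonempty (Sg i ⋙ Sg j ⋙ Sg i ≅ Sg j ⋙ Sg i ⋙ Sg j))
    (hcomm : ∀ i j : B, M i j = 2 → Nonempty (Sg i ⋙ Sg j ≅ Sg j ⋙ Sg i)) :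
    ∀ n : ℕ, ∀ l l' : List B, l.length = n → cs.IsReduced l → cs.IsReduced l' →
      π l = π l' → Nonempty (wordFunctor Sg l ≅ wordFunctor Sg l') := by
  intro n
  induction n using Nat.strong_induction_on with
  | _ n IH =>
  intro l l' hlen hred hred' heq
  cases l with
  | nil =>
    have h0 : l' = [] := by
      have hz : ℓ (π l') = 0 := by rw [← heq, cs.wordProd_nil, cs.length_one]
      have hr : ℓ (π l') = l'.length := hred'
      exact List.length_eq_zero_iff.mp (by omega)
    subst h0
    exact ⟨Iso.refl _⟩
  | cons i t =>
  cases l' with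
  | nil =>
    exfalso
    have h1 : ℓ (π (i :: t)) = 0 := by rw [heq, cs.wordProd_nil, cs.length_one]
    have h2 : ℓ (π (i :: t)) = (i :: t).length := hred
    simp only [List.length_cons] at h2
    omega
  | cons j t' =>
  have hredt : cs.IsReduced t := CoxeterSystem.IsReduced.drop hred 1
  have hredt' : cs.IsReduced t' := CoxeterSystem.IsReduced.drop hred' 1
  set w := π (i :: t) with hw
  have hwlen : ℓ w = n := by
    have : ℓ w = (i :: t).length := hred
    rw [this, hlen]
  have hsit : s i * w = π t := by
    rw [hw, cs.wordProd_cons, cs.simple_mul_simple_cancel_left]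
  have hsjt : s j * w = π t' := by
    rw [heq, cs.wordProd_cons, cs.simple_mul_simple_cancel_left]
  have htlen : ℓ (π t) = t.length := hredt
  have htlen' : ℓ (π t') = t'.length := hredt'
  have hlent : t.length + 1 = n := by simpa using hlen
  have hlent' : t'.length + 1 = n := by
    have h5 : ℓ (π (j :: t')) = (j :: t').length := hred'
    rw [← heq] at h5
    simp only [List.length_cons] at h5
    omega
  have hi : ℓ (s i * w) < ℓ w := by rw [hsit]; omega
  have hj : ℓ (s j * w) < ℓ w := by rw [hsjt]; omega
  by_cases hij : i = j
  · subst hij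
    have heqt : π t = π t' := by rw [← hsit, ← hsjt]
    obtain ⟨e⟩ := IH t.length (by omega) t t' rfl hredt hredt' heqt
    exact ⟨Functor.isoWhiskerRight e (Sg i)⟩
  · have hne : s i ≠ s j := simple_injective cs hSL hij
    rcases hSL i j hij with hm | hm
    · -- commuting case, M i j = 2
      obtain ⟨ecomm⟩ := hcomm j i (by rw [← M.symmetric i j]; exact hm)
      have hcel : s i * s j = s j * s i := by
        have h2 : (s i * s j) ^ 2 = 1 := by rw [← hm]; exact cs.simple_mul_simple_pow i j
        have h2' : s i * s j = (s i * s j)⁻¹ :=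
          eq_inv_of_mul_eq_one_left (by rw [← pow_two]; exact h2)
        rwa [mul_inv_rev, cs.inv_simple, cs.inv_simple] at h2'
      obtain ⟨v, hwv, hlv⟩ := dd2 cs hne hm hi hj
      obtain ⟨u, hredu, hequ⟩ := cs.exists_reduced_word' v
      have hulen : u.length = ℓ v := by
        have : ℓ (π u) = u.length := hredu
        rw [← this, ← hequ]
      have h_siw : s i * w = s j * v := by
        rw [hwv, cs.simple_mul_simple_cancel_left]
      have h_sjw : s j * w = s i * v := by
        rw [hwv]
        calc s j * (s i * (s j * v)) = (s j * s i * s j) * v := by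
              rw [← mul_assoc, ← mul_assoc]
          _ = (s i * s j * s j) * v := by rw [← hcel]
          _ = s i * v := by rw [cs.simple_mul_simple_cancel_right]
      have hju : π (j :: u) = π t := by
        rw [cs.wordProd_cons, ← hequ, ← h_siw, hsit]
      have hiu : π (i :: u) = π t' := by
        rw [cs.wordProd_cons, ← hequ, ← h_sjw, hsjt]
      have hredju : cs.IsReduced (j :: u) := by
        show ℓ (π (j :: u)) = (j :: u).length
        rw [hju, htlen]
        simp only [List.length_cons]
        omega
      have hrediu : cs.IsReduced (i :: u) := by
        show ℓ (π (i :: u)) = (i :: u).length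
        rw [hiu, htlen']
        simp only [List.length_cons]
        omega
      obtain ⟨e1⟩ := IH t.length (by omega) t (j :: u) rfl hredt hredju hju.symm
      obtain ⟨e2⟩ := IH t'.length (by omega) t' (i :: u) rfl hredt' hrediu hiu.symm
      exact ⟨(Functor.isoWhiskerRight e1 (Sg i)) ≪≫
        (Functor.associator (wordFunctor Sg u) (Sg j) (Sg i)) ≪≫
        (Functor.isoWhiskerLeft (wordFunctor Sg u) ecomm) ≪≫
        (Functor.associator (wordFunctor Sg u) (Sg i) (Sg j)).symm ≪≫
        (Functor.isoWhiskerRight e2 (Sg j)).symm⟩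
    · -- braid case, M i j = 3
      obtain ⟨ebraid⟩ := hbraid i j hm
      have h3 : (s i * s j) ^ 3 = 1 := by rw [← hm]; exact cs.simple_mul_simple_pow i j
      have hb := braid_eq cs h3
      obtain ⟨v, hwv, hlv⟩ := dd3 cs hne hm hi hj
      obtain ⟨u, hredu, hequ⟩ := cs.exists_reduced_word' v
      have hulen : u.length = ℓ v := by
        have : ℓ (π u) = u.length := hredu
        rw [← this, ← hequ]
      have h_siw : s i * w = s j * (s i * v) := by
        rw [hwv, cs.simple_mul_simple_cancel_left]
      have h_sjw : s j * w = s i * (s j * v) := by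
        rw [hwv]
        calc s j * (s i * (s j * (s i * v))) = (s j * s i * s j) * (s i * v) := by
              rw [← mul_assoc, ← mul_assoc]
          _ = (s i * s j * s i) * (s i * v) := by rw [← hb]
          _ = s i * (s j * v) := by
              rw [mul_assoc, mul_assoc, cs.simple_mul_simple_cancel_left]
      have hjiu : π (j :: i :: u) = π t := by
        rw [cs.wordProd_cons, cs.wordProd_cons, ← hequ, ← h_siw, hsit]
      have hiju : π (i :: j :: u) = π t' := by
        rw [cs.wordProd_cons, cs.wordProd_cons, ← hequ, ← h_sjw, hsjt]
      have hredjiu : cs.IsReduced (j :: i :: u) := by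
        show ℓ (π (j :: i :: u)) = (j :: i :: u).length
        rw [hjiu, htlen]
        simp only [List.length_cons]
        omega
      have hrediju : cs.IsReduced (i :: j :: u) := by
        show ℓ (π (i :: j :: u)) = (i :: j :: u).length
        rw [hiju, htlen']
        simp only [List.length_cons]
        omega
      obtain ⟨e1⟩ := IH t.length (by omega) t (j :: i :: u) rfl hredt hredjiu hjiu.symm
      obtain ⟨e2⟩ := IH t'.length (by omega) t' (i :: j :: u) rfl hredt' hrediju hiju.symm
      exact ⟨(Functor.isoWhiskerRight e1 (Sg i)) ≪≫
        (Functor.associator (wordFunctor Sg u ⋙ Sg i) (Sg j) (Sg i)) ≪≫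
        (Functor.associator (wordFunctor Sg u) (Sg i) (Sg j ⋙ Sg i)) ≪≫
        (Functor.isoWhiskerLeft (wordFunctor Sg u) ebraid) ≪≫
        (Functor.associator (wordFunctor Sg u) (Sg j) (Sg i ⋙ Sg j)).symm ≪≫
        (Functor.associator (wordFunctor Sg u ⋙ Sg j) (Sg i) (Sg j)).symm ≪≫
        (Functor.isoWhiskerRight e2 (Sg j)).symm⟩

end Stmt17Aux

theorem stmt17 {B : Type*} (M : CoxeterMatrix B) {W : Type*} [Group W]
    (cs : CoxeterSystem M W)
    -- simply laced: any two distinct vertices are either non-adjacent (`m i j = 2`)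
    -- or joined by a single edge (`m i j = 3`)
    (hSL : ∀ i j : B, i ≠ j → M i j = 2 ∨ M i j = 3)
    {C : Type*} [Category C] (Sg : B → C ⥤ C)
    -- the braid relation for vertices joined by one edge
    (hbraid : ∀ i j : B, M i j = 3 →
      Nonempty (Sg i ⋙ Sg j ⋙ Sg i ≅ Sg j ⋙ Sg i ⋙ Sg j))
    -- commutation for non-adjacent vertices
    (hcomm : ∀ i j : B, M i j = 2 → Nonempty (Sg i ⋙ Sg j ≅ Sg j ⋙ Sg i)) :
    ∀ l l' : List B, cs.IsReduced l → cs.IsReduced l' →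
      cs.wordProd l = cs.wordProd l' →
      Nonempty (wordFunctor Sg l ≅ wordFunctor Sg l') := by
  intro l l' h h' heq
  exact Stmt17Aux.main cs hSL Sg hbraid hcomm l.length l l' rfl h h' heq
end
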